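/- For every positive integer i and real α, the function x ↦ x^α · |ψ^(i)(x)| is strictly increasing on (0, ∞) if and only if α ≥ i + 1. -/

import Mathlib

open Real Filter Topology Set

noncomputable def S (k : ℕ) (x : ℝ) : ℝ := ∑' n : ℕ, ((x + n) ^ k)⁻¹

lemma xn_pos {x : ℝ} (hx : 0 < x) (n : ℕ) : 0 < x + n := by positivity

lemma summable_S {k : ℕ} (hk : 2 ≤ k) {x : ℝ} (hx : 0 < x) :
    Summable fun n : ℕ => ((x + n) ^ k)⁻¹ := by
  have hc : 0 < min x 1 := lt_min hx one_pos
  have hbase : Summable fun n : ℕ => ((min x 1) ^ k)⁻¹ * (((n : ℝ) + 1) ^ 2)⁻¹ := by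
    apply Summable.mul_left
    have := (summable_nat_add_iff (f := fun n : ℕ => (((n : ℝ)) ^ 2)⁻¹) 1).mpr
      (by simpa only [one_div] using Real.summable_one_div_nat_pow.mpr one_lt_two)
    simpa using this
  refine Summable.of_nonneg_of_le (fun n => by positivity) (fun n => ?_) hbase
  have h1 : min x 1 * ((n : ℝ) + 1) ≤ x + n := by
    have h2 : min x 1 ≤ x := min_le_left _ _
    have h3 : min x 1 ≤ 1 := min_le_right _ _
    nlinarith [Nat.cast_nonneg (α := ℝ) n]
  have h4 : (min x 1 * ((n : ℝ) + 1)) ^ k ≤ (x + n) ^ k := by gcongr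
  have h5 : (min x 1) ^ k * ((n : ℝ) + 1) ^ 2 ≤ (min x 1 * ((n : ℝ) + 1)) ^ k := by
    rw [mul_pow]
    have : ((n : ℝ) + 1) ^ 2 ≤ ((n : ℝ) + 1) ^ k :=
      pow_le_pow_right₀ (by linarith [Nat.cast_nonneg (α := ℝ) n]) hk
    exact mul_le_mul_of_nonneg_left this (by positivity)
  rw [← mul_inv]
  exact inv_anti₀ (by positivity) (le_trans h5 h4)

lemma S_pos {k : ℕ} (hk : 2 ≤ k) {x : ℝ} (hx : 0 < x) : 0 < S k x := by
  refine Summable.tsum_pos (summable_S hk hx) (fun n => by positivity) 0 (by positivity)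

lemma le_S {k : ℕ} (hk : 2 ≤ k) {x : ℝ} (hx : 0 < x) : (x ^ k)⁻¹ ≤ S k x := by
  have := Summable.le_tsum (summable_S hk hx) 0 (fun n _ => by positivity)
  simpa [S] using this

lemma hasDerivAt_term (j : ℕ) (c : ℝ) {y : ℝ} (hy : 0 < y + c) :
    HasDerivAt (fun z : ℝ => ((z + c) ^ (j + 1))⁻¹) (-((j : ℝ) + 1) * ((y + c) ^ (j + 2))⁻¹) y := by
  have h1 : HasDerivAt (fun z : ℝ => z + c) 1 y := (hasDerivAt_id y).add_const c
  have h2 := h1.fun_pow (j + 1)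
  have h3 := h2.fun_inv (pow_ne_zero _ hy.ne')
  refine h3.congr_deriv ?_
  have hne : y + c ≠ 0 := hy.ne'
  simp only [Nat.add_sub_cancel]
  field_simp
  push_cast; ring

lemma hasDerivAt_S {k : ℕ} (hk : 2 ≤ k) {x : ℝ} (hx : 0 < x) :
    HasDerivAt (S k) (-(k : ℝ) * S (k + 1) x) x := by
  obtain ⟨j, rfl⟩ : ∃ j, k = j + 1 := ⟨k - 1, by omega⟩
  have hx2 : 0 < x / 2 := by linarith
  have key := hasDerivAt_tsum_of_isPreconnected
    (u := fun n : ℕ => ((j : ℝ) + 1) * ((x / 2 + n) ^ (j + 2))⁻¹)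
    (g := fun n : ℕ => fun z : ℝ => ((z + (n : ℝ)) ^ (j + 1))⁻¹)
    (g' := fun n : ℕ => fun z : ℝ => -((j : ℝ) + 1) * ((z + (n : ℝ)) ^ (j + 2))⁻¹)
    (t := Ioi (x / 2)) (y₀ := x) (y := x)
    (((summable_S (by omega) hx2).mul_left _))
    isOpen_Ioi (isPreconnected_Ioi)
    (fun n y hy => hasDerivAt_term j n (by have : (0:ℝ) ≤ n := Nat.cast_nonneg n; simp at hy; linarith))
    (fun n y hy => ?_) (by simp [hx2]; linarith) (summable_S hk hx) (by simp; linarith)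
  · have : (∑' n : ℕ, -((j : ℝ) + 1) * ((x + (n : ℝ)) ^ (j + 2))⁻¹)
        = -((j : ℝ) + 1) * S (j + 2) x := tsum_mul_left
    rw [this] at key
    refine key.congr_deriv ?_
    push_cast; ring
  · simp only [mem_Ioi] at hy
    have hyn : 0 < y + n := by have : (0:ℝ) ≤ n := Nat.cast_nonneg n; linarith
    rw [norm_mul, norm_neg, Real.norm_eq_abs, Real.norm_eq_abs,
      abs_of_pos (by positivity : (0:ℝ) < (j:ℝ)+1), abs_of_pos (by positivity)]
    have h2 : (0:ℝ) < x / 2 + n := by have : (0:ℝ) ≤ n := Nat.cast_nonneg n; linarith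
    refine mul_le_mul_of_nonneg_left (inv_anti₀ (by positivity) ?_) (by positivity)
    gcongr

noncomputable def psiAux (x : ℝ) : ℝ := ∑' m : ℕ, (((m : ℝ) + 1)⁻¹ - (x + m)⁻¹)

lemma diff_eq {x : ℝ} (hx : 0 < x) (m : ℕ) :
    ((m : ℝ) + 1)⁻¹ - (x + m)⁻¹ = (x - 1) * (((m : ℝ) + 1) * (x + m))⁻¹ := by
  have h1 : ((m : ℝ) + 1) ≠ 0 := by positivity
  have h2 : (x + m) ≠ 0 := by positivity
  field_simp
  ring

lemma summable_g {x : ℝ} (hx : 0 < x) :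
    Summable fun m : ℕ => (((m : ℝ) + 1) * (x + m))⁻¹ := by
  have hc : 0 < min x 1 := lt_min hx one_pos
  have hbase : Summable fun n : ℕ => (min x 1)⁻¹ * (((n : ℝ) + 1) ^ 2)⁻¹ := by
    apply Summable.mul_left
    have := (summable_nat_add_iff (f := fun n : ℕ => (((n : ℝ)) ^ 2)⁻¹) 1).mpr
      (by simpa only [one_div] using Real.summable_one_div_nat_pow.mpr one_lt_two)
    simpa using this
  refine Summable.of_nonneg_of_le (fun n => by positivity) (fun n => ?_) hbase
  have h1 : min x 1 * ((n : ℝ) + 1) ≤ x + n := by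
    have h2 : min x 1 ≤ x := min_le_left _ _
    have h3 : min x 1 ≤ 1 := min_le_right _ _
    nlinarith [Nat.cast_nonneg (α := ℝ) n]
  rw [← mul_inv]
  refine inv_anti₀ (by positivity) ?_
  calc min x 1 * ((n : ℝ) + 1) ^ 2 = ((n : ℝ) + 1) * (min x 1 * ((n : ℝ) + 1)) := by ring
  _ ≤ ((n : ℝ) + 1) * (x + n) := by
      refine mul_le_mul_of_nonneg_left h1 (by positivity)

lemma summable_t {x : ℝ} (hx : 0 < x) :
    Summable fun m : ℕ => (((m : ℝ) + 1)⁻¹ - (x + m)⁻¹) := by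
  have := ((summable_g hx).mul_left (x - 1)).congr (fun m => (diff_eq hx m).symm)
  exact this

lemma hasDerivAt_psiAux {x : ℝ} (hx : 0 < x) : HasDerivAt psiAux (S 2 x) x := by
  have hx2 : 0 < x / 2 := by linarith
  have key := hasDerivAt_tsum_of_isPreconnected
    (u := fun m : ℕ => ((x / 2 + m) ^ 2)⁻¹)
    (g := fun m : ℕ => fun y : ℝ => (((m : ℝ) + 1)⁻¹ - (y + m)⁻¹))
    (g' := fun m : ℕ => fun y : ℝ => ((y + (m : ℝ)) ^ 2)⁻¹)
    (t := Ioi (x / 2)) (y₀ := x) (y := x)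
    (summable_S le_rfl hx2) isOpen_Ioi isPreconnected_Ioi
    (fun m y hy => ?_) (fun m y hy => ?_)
    (by simp [mem_Ioi]; linarith) (summable_t hx) (by simp [mem_Ioi]; linarith)
  · exact key
  · simp only [mem_Ioi] at hy
    have hym : 0 < y + (m : ℝ) := by have : (0:ℝ) ≤ m := Nat.cast_nonneg m; linarith
    have h0 := hasDerivAt_term 0 (m : ℝ) hym
    simp only [pow_one, zero_add, Nat.cast_zero] at h0
    have := (h0.const_sub (((m : ℝ) + 1)⁻¹))
    convert this using 1
    ring
  · simp only [mem_Ioi] at hy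
    have hym : 0 < y + (m : ℝ) := by have : (0:ℝ) ≤ m := Nat.cast_nonneg m; linarith
    have h2 : (0:ℝ) < x / 2 + m := by have : (0:ℝ) ≤ m := Nat.cast_nonneg m; linarith
    rw [Real.norm_eq_abs, abs_of_pos (by positivity)]
    refine inv_anti₀ (by positivity) ?_
    gcongr

lemma tendsto_logpart :
    Tendsto (fun n : ℕ => Real.log n - (harmonic (n + 1) : ℝ)) atTop
      (𝓝 (-Real.eulerMascheroniConstant)) := by
  have h1 : Tendsto (fun n : ℕ => (harmonic (n + 1) : ℝ) - Real.log (n + 1)) atTop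
      (𝓝 Real.eulerMascheroniConstant) := by
    have := Real.tendsto_harmonic_sub_log.comp (tendsto_add_atTop_nat 1)
    refine this.congr (fun n => ?_)
    simp only [Function.comp_apply]
    push_cast
    ring_nf
  have h2 : Tendsto (fun n : ℕ => Real.log (n + 1) - Real.log n) atTop (𝓝 0) := by
    have key : Tendsto (fun x : ℝ => Real.log (1 + 1 / x)) atTop (𝓝 0) := by
      simpa only [add_zero, Real.log_one, id] using
        ((tendsto_const_nhds.div_atTop tendsto_id).const_add 1).log (by positivity)
    have := key.comp tendsto_natCast_atTop_atTop
    apply this.congr'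
    filter_upwards [eventually_gt_atTop 0] with n hn
    have hn' : (0:ℝ) < n := by exact_mod_cast hn
    simp only [Function.comp_apply]
    rw [← Real.log_div (by positivity) (by positivity), add_div, div_self hn'.ne', one_div]
  have := (h1.add h2).neg
  simp only [add_zero] at this
  refine this.congr (fun n => ?_)
  ring



lemma hasDerivAt_logGammaSeq (n : ℕ) {y : ℝ} (hy : 0 < y) :
    HasDerivAt (fun z => Real.BohrMollerup.logGammaSeq z n)
      ((Real.log n - (harmonic (n + 1) : ℝ)) +
        ∑ m ∈ Finset.range (n + 1), (((m : ℝ) + 1)⁻¹ - (y + m)⁻¹)) y := by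
  have h1 : HasDerivAt (fun z : ℝ => z * Real.log n + Real.log (Nat.factorial n)) (Real.log n) y := by
    simpa using ((hasDerivAt_id y).mul_const (Real.log n)).add_const (Real.log (Nat.factorial n))
  have h2 : HasDerivAt (fun z : ℝ => ∑ m ∈ Finset.range (n + 1), Real.log (z + m))
      (∑ m ∈ Finset.range (n + 1), (y + m)⁻¹) y := by
    apply HasDerivAt.fun_sum
    intro m _
    have hym : y + (m : ℝ) ≠ 0 := by have : (0:ℝ) ≤ m := Nat.cast_nonneg m; positivity
    have := ((hasDerivAt_id y).add_const (m : ℝ)).log hym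
    simpa [one_div] using this
  have h3 := h1.fun_sub h2
  have heq : (fun z : ℝ => z * Real.log n + Real.log (Nat.factorial n)
      - ∑ m ∈ Finset.range (n + 1), Real.log (z + m))
      = fun z => Real.BohrMollerup.logGammaSeq z n := by
    funext z; rw [Real.BohrMollerup.logGammaSeq]
  rw [heq] at h3
  refine h3.congr_deriv ?_
  have hh : (harmonic (n + 1) : ℝ) = ∑ m ∈ Finset.range (n + 1), ((m : ℝ) + 1)⁻¹ := by
    rw [harmonic]
    push_cast
    rfl
  rw [Finset.sum_sub_distrib, hh]
  ring

lemma hasDerivAt_logGamma {x : ℝ} (hx : 0 < x) :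
    HasDerivAt (fun y : ℝ => Real.log (Real.Gamma y))
      (-Real.eulerMascheroniConstant + psiAux x) x := by
  have hx2 : 0 < x / 2 := by linarith
  set s : Set ℝ := Ioo (x / 2) (x + 1) with hs_def
  have hs : IsOpen s := isOpen_Ioo
  have hxs : x ∈ s := ⟨by linarith, by linarith⟩
  have hsub : ∀ y ∈ s, 0 < y := fun y hy => lt_trans hx2 hy.1
  refine hasDerivAt_of_tendstoUniformlyOn (l := atTop)
    (g := fun y : ℝ => Real.log (Real.Gamma y))
    (g' := fun y : ℝ => -Real.eulerMascheroniConstant + psiAux y)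
    (f := fun (n : ℕ) (z : ℝ) => Real.BohrMollerup.logGammaSeq z n)
    (f' := fun (n : ℕ) (y : ℝ) => (Real.log n - (harmonic (n + 1) : ℝ)) +
        ∑ m ∈ Finset.range (n + 1), (((m : ℝ) + 1)⁻¹ - (y + m)⁻¹)) hs ?_ ?_ ?_ hxs
  · have hconst : TendstoUniformlyOn
        (fun (n : ℕ) (_ : ℝ) => Real.log n - (harmonic (n + 1) : ℝ))
        (fun _ => -Real.eulerMascheroniConstant) atTop s :=
      tendsto_logpart.tendstoUniformlyOn_const s
    have hu : Summable (fun m : ℕ => (x + 2) * (((m : ℝ) + 1) * (x / 2 + m))⁻¹) :=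
      (summable_g hx2).mul_left _
    have hbound : ∀ (m : ℕ), ∀ y ∈ s, ‖((m : ℝ) + 1)⁻¹ - (y + m)⁻¹‖
        ≤ (x + 2) * (((m : ℝ) + 1) * (x / 2 + m))⁻¹ := by
      intro m y hy
      obtain ⟨hy1, hy2⟩ := hy
      have hy0 : 0 < y := lt_trans hx2 hy1
      have hm0 : (0:ℝ) ≤ m := Nat.cast_nonneg m
      rw [diff_eq hy0 m, norm_mul, Real.norm_eq_abs, Real.norm_eq_abs,
        abs_of_pos (by positivity : (0:ℝ) < (((m : ℝ) + 1) * (y + m))⁻¹)]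
      have h1 : |y - 1| ≤ x + 2 := abs_le.mpr ⟨by linarith, by linarith⟩
      have h2 : (((m : ℝ) + 1) * (y + m))⁻¹ ≤ (((m : ℝ) + 1) * (x / 2 + m))⁻¹ := by
        refine inv_anti₀ (by positivity) ?_
        refine mul_le_mul_of_nonneg_left (by linarith) (by positivity)
      exact mul_le_mul h1 h2 (by positivity) (by linarith)
    have hsum0 := tendstoUniformlyOn_tsum_nat hu hbound
    have hsum : TendstoUniformlyOn
        (fun (n : ℕ) (y : ℝ) => ∑ m ∈ Finset.range (n + 1), (((m : ℝ) + 1)⁻¹ - (y + m)⁻¹))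
        psiAux atTop s := fun v hv => (tendsto_add_atTop_nat 1).eventually (hsum0 v hv)
    exact hconst.add hsum
  · exact Eventually.of_forall (fun n y hy => hasDerivAt_logGammaSeq n (hsub y hy))
  · exact fun y hy => Real.BohrMollerup.tendsto_log_gamma (hsub y hy)

noncomputable def digamma : ℝ → ℝ := deriv (fun x => Real.log (Real.Gamma x))

noncomputable def polygamma (i : ℕ) : ℝ → ℝ := iteratedDeriv i digamma

lemma digamma_eq {x : ℝ} (hx : 0 < x) :
    digamma x = -Real.eulerMascheroniConstant + psiAux x :=
  (hasDerivAt_logGamma hx).deriv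

lemma deriv_digamma {x : ℝ} (hx : 0 < x) : deriv digamma x = S 2 x := by
  have hev : digamma =ᶠ[𝓝 x] (fun y => -Real.eulerMascheroniConstant + psiAux y) := by
    filter_upwards [isOpen_Ioi.mem_nhds (show x ∈ Ioi 0 from hx)] with y hy
    exact digamma_eq hy
  rw [hev.deriv_eq]
  exact ((hasDerivAt_psiAux hx).const_add (-Real.eulerMascheroniConstant)).deriv

lemma polygamma_formula (j : ℕ) : ∀ {x : ℝ}, 0 < x →
    iteratedDeriv j (deriv digamma) x
      = (-1) ^ j * (Nat.factorial (j + 1) : ℝ) * S (j + 2) x := by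
  induction j with
  | zero =>
    intro x hx
    simpa [iteratedDeriv_zero] using deriv_digamma hx
  | succ j ih =>
    intro x hx
    rw [iteratedDeriv_succ]
    have hev : iteratedDeriv j (deriv digamma)
        =ᶠ[𝓝 x] (fun y => (-1) ^ j * (Nat.factorial (j + 1) : ℝ) * S (j + 2) y) := by
      filter_upwards [isOpen_Ioi.mem_nhds (show x ∈ Ioi 0 from hx)] with y hy
      exact ih hy
    rw [hev.deriv_eq]
    have h := ((hasDerivAt_S (k := j + 2) (by omega) hx).const_mul
      ((-1 : ℝ) ^ j * (Nat.factorial (j + 1) : ℝ))).deriv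
    rw [h]
    have : (j + 1 + 2) = (j + 3) := by omega
    rw [this]
    have h2 : S (j + 2 + 1) x = S (j + 3) x := by norm_num
    rw [h2, Nat.factorial_succ (j + 1)]
    push_cast
    ring

lemma polygamma_abs {i : ℕ} (hi : 0 < i) {x : ℝ} (hx : 0 < x) :
    |polygamma i x| = (Nat.factorial i : ℝ) * S (i + 1) x := by
  obtain ⟨j, rfl⟩ : ∃ j, i = j + 1 := ⟨i - 1, by omega⟩
  have h : polygamma (j + 1) x = (-1) ^ j * (Nat.factorial (j + 1) : ℝ) * S (j + 2) x := by
    rw [polygamma, iteratedDeriv_succ']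
    exact polygamma_formula j hx
  rw [h, abs_mul, abs_mul, abs_pow, abs_neg, abs_one, one_pow, one_mul,
    abs_of_pos (S_pos (by omega) hx), abs_of_nonneg (by positivity : (0:ℝ) ≤ (Nat.factorial (j+1) : ℝ))]

lemma S_strict {k : ℕ} (hk : 2 ≤ k) {x : ℝ} (hx : 0 < x) : x * S (k + 1) x < S k x := by
  have h1 : x * S (k + 1) x = ∑' n : ℕ, x * ((x + n) ^ (k + 1))⁻¹ := tsum_mul_left.symm
  rw [h1, S]
  have hterm : ∀ n : ℕ, x * ((x + n) ^ (k + 1))⁻¹ ≤ ((x + n) ^ k)⁻¹ := by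
    intro n
    have hxn : 0 < x + n := by positivity
    have heq : (x + n) * ((x + n) ^ (k + 1))⁻¹ = ((x + n) ^ k)⁻¹ := by
      rw [pow_succ, mul_inv]
      field_simp
    calc x * ((x + n) ^ (k + 1))⁻¹ ≤ (x + n) * ((x + n) ^ (k + 1))⁻¹ := by
          refine mul_le_mul_of_nonneg_right ?_ (by positivity)
          simpa using Nat.cast_nonneg (α := ℝ) n
    _ = ((x + n) ^ k)⁻¹ := heq
  have hstrict : x * ((x + 1) ^ (k + 1))⁻¹ < ((x + 1) ^ k)⁻¹ := by
    have hxn : (0:ℝ) < x + 1 := by linarith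
    have heq : (x + 1) * ((x + 1) ^ (k + 1))⁻¹ = ((x + 1) ^ k)⁻¹ := by
      rw [pow_succ, mul_inv]
      field_simp
    calc x * ((x + 1) ^ (k + 1))⁻¹ < (x + 1) * ((x + 1) ^ (k + 1))⁻¹ := by
          refine mul_lt_mul_of_pos_right (by linarith) (by positivity)
    _ = ((x + 1) ^ k)⁻¹ := heq
  have h2 : (fun n : ℕ => x * ((x + n) ^ (k + 1))⁻¹) 1 < (fun n : ℕ => ((x + n) ^ k)⁻¹) 1 := by
    simpa using hstrict
  exact Summable.tsum_lt_tsum hterm h2 ((summable_S (by omega) hx).mul_left x) (summable_S hk hx)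

lemma strictMonoOn_congr' {f g : ℝ → ℝ} {s : Set ℝ} (h : Set.EqOn f g s)
    (hg : StrictMonoOn g s) : StrictMonoOn f s := fun a ha b hb hab => by
  rw [h ha, h hb]; exact hg ha hb hab

theorem stmt2 (i : ℕ) (hi : 0 < i) (α : ℝ) :
    StrictMonoOn (fun x : ℝ => x ^ α * |polygamma i x|) (Set.Ioi 0) ↔ (i : ℝ) + 1 ≤ α := by
  have hfac : (0:ℝ) < (Nat.factorial i : ℝ) := by positivity
  constructor
  · -- forward
    intro hmono
    by_contra hα
    push_neg at hα
    set e : ℝ := α - ((i : ℝ) + 1) with he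
    have hee : e < 0 := by simp [he]; linarith
    have hlim : Tendsto (fun x : ℝ => (Nat.factorial i : ℝ) * x ^ e) (𝓝[>] (0:ℝ)) atTop := by
      have h1 : Tendsto (fun x : ℝ => x ^ e) (𝓝[>] (0:ℝ)) atTop := by
        have h2 : Tendsto (fun x : ℝ => (x⁻¹) ^ (-e)) (𝓝[>] (0:ℝ)) atTop :=
          (tendsto_rpow_atTop (by linarith)).comp tendsto_inv_nhdsGT_zero
        refine h2.congr' ?_
        filter_upwards [self_mem_nhdsWithin] with x (hx : (0:ℝ) < x)
        rw [Real.inv_rpow hx.le, ← Real.rpow_neg hx.le, neg_neg]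
      exact h1.const_mul_atTop hfac
    set H : ℝ → ℝ := fun x : ℝ => x ^ α * |polygamma i x| with hH
    have h3 : ∀ᶠ x in 𝓝[>] (0:ℝ), H 1 + 1 ≤ (Nat.factorial i : ℝ) * x ^ e :=
      hlim.eventually_ge_atTop (H 1 + 1)
    have h4 : ∀ᶠ x in 𝓝[>] (0:ℝ), x < 1 :=
      Filter.Eventually.filter_mono nhdsWithin_le_nhds (eventually_lt_nhds one_pos)
    have h5 : ∀ᶠ x in 𝓝[>] (0:ℝ), (0:ℝ) < x := eventually_mem_nhdsWithin
    obtain ⟨x, hx3, hx4, hx5⟩ := (h3.and (h4.and h5)).exists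
    have hx0 : (0:ℝ) < x := hx5
    have hHx : (Nat.factorial i : ℝ) * x ^ e ≤ H x := by
      have hle : (x ^ (i + 1))⁻¹ ≤ S (i + 1) x := le_S (by omega) hx0
      have h6 : x ^ α * ((Nat.factorial i : ℝ) * (x ^ (i + 1))⁻¹)
          ≤ x ^ α * ((Nat.factorial i : ℝ) * S (i + 1) x) := by
        have hxa : (0:ℝ) ≤ x ^ α := (Real.rpow_pos_of_pos hx0 α).le
        refine mul_le_mul_of_nonneg_left (mul_le_mul_of_nonneg_left hle hfac.le) hxa
      have h7 : x ^ α * ((Nat.factorial i : ℝ) * (x ^ (i + 1))⁻¹)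
          = (Nat.factorial i : ℝ) * x ^ e := by
        rw [← Real.rpow_natCast x (i + 1), ← Real.rpow_neg hx0.le, ← mul_assoc,
          mul_comm (x ^ α), mul_assoc, ← Real.rpow_add hx0]
        push_cast [he]
        ring_nf
      rw [hH]
      simp only
      rw [polygamma_abs hi hx0, ← h7]
      exact h6
    have hlt : H x < H 1 := hmono (show x ∈ Ioi (0:ℝ) from hx0)
      (Set.mem_Ioi.mpr one_pos) hx4
    linarith
  · -- backward
    intro hα
    have hα0 : (0:ℝ) < α := by
      have : (0:ℝ) ≤ i := Nat.cast_nonneg i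
      linarith
    set K : ℝ → ℝ := fun x => x ^ α * ((Nat.factorial i : ℝ) * S (i + 1) x) with hK
    have hKd : ∀ x ∈ Ioi (0:ℝ), HasDerivAt K
        (α * x ^ (α - 1) * ((Nat.factorial i : ℝ) * S (i + 1) x)
          + x ^ α * ((Nat.factorial i : ℝ) * (-((i : ℝ) + 1) * S (i + 2) x))) x := by
      intro x hx
      have hx0 : (0:ℝ) < x := hx
      have h1 : HasDerivAt (fun y : ℝ => y ^ α) (α * x ^ (α - 1)) x :=
        Real.hasDerivAt_rpow_const (Or.inl hx0.ne')
      have h2 : HasDerivAt (fun y => (Nat.factorial i : ℝ) * S (i + 1) y)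
          ((Nat.factorial i : ℝ) * (-((i : ℝ) + 1) * S (i + 2) x)) x := by
        have h3 := (hasDerivAt_S (k := i + 1) (by omega) hx0).const_mul (Nat.factorial i : ℝ)
        have h4 : (i + 1 + 1) = i + 2 := by omega
        rw [h4] at h3
        refine h3.congr_deriv ?_
        push_cast
        ring
      exact h1.mul h2
    have hmono : StrictMonoOn K (Ioi 0) := by
      refine strictMonoOn_of_deriv_pos (convex_Ioi 0) ?_ ?_
      · exact fun x hx => ((hKd x hx).continuousAt).continuousWithinAt
      · intro x hx
        rw [interior_Ioi] at hx
        have hx0 : (0:ℝ) < x := hx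
        rw [(hKd x hx).deriv]
        have hxα : x ^ α = x ^ (α - 1) * x := by
          rw [← Real.rpow_add_one hx0.ne' (α - 1), sub_add_cancel]
        rw [hxα]
        have hS1 : 0 < S (i + 1) x := S_pos (by omega) hx0
        have hstrict : x * S (i + 2) x < S (i + 1) x := by
          have h8 := S_strict (k := i + 1) (by omega) hx0
          have h9 : (i + 1 + 1) = i + 2 := by omega
          rwa [h9] at h8
        have hxp : (0:ℝ) < x ^ (α - 1) := Real.rpow_pos_of_pos hx0 _
        have hkey : 0 < α * S (i + 1) x - x * (((i : ℝ) + 1) * S (i + 2) x) := by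
          nlinarith [hS1, hstrict, hα, Nat.cast_nonneg (α := ℝ) i,
            mul_pos hx0 (S_pos (k := i + 2) (by omega) hx0)]
        nlinarith [mul_pos (mul_pos hxp hfac) hkey]
    refine strictMonoOn_congr' (fun x hx => ?_) hmono
    show x ^ α * |polygamma i x| = K x
    rw [polygamma_abs hi hx]
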